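/- arXiv:2512.18860 — 3 statements merged into one kernel-verified Lean document; each statement's English description precedes it below -/
import Mathlib

section
/- Let T and C be independent nonnegative random variables, let ε be a random variable taking values in {1,2,3} that is measurable with respect to T (i.e., ε = f(T) for a measurable f), let G₋(u)=P(C≥u), and define the subdistribution function F_j(t)=P(T≤t, ε=j). Then P(T ≤ u, ε = j, C ≥ T) = ∫_{[0,u]} G₋ dF_j for every u ≥ 0. -/
open MeasureTheory ProbabilityTheory Set

/-- Let `T`, `C` be independent nonnegative random variables, `ε = f(T)` a cause
indicator with values in `{1,2,3}` (modeled as `Fin 3`), and let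
`F_j` be the subdistribution measure of cause `j`, i.e. the image under `T` of the
restriction of `P` to `{ε = j}`.  Then
`P(T ≤ u, ε = j, C ≥ T) = ∫_{[0,u]} G₋(s) dF_j(s)` where `G₋(s) = P(C ≥ s)`. -/
theorem stmt1 {Ω : Type*} [MeasurableSpace Ω] (P : Measure Ω) [IsProbabilityMeasure P]
    (T C : Ω → ℝ) (hT : Measurable T) (hC : Measurable C)
    (hTnn : ∀ ω, 0 ≤ T ω) (hCnn : ∀ ω, 0 ≤ C ω)
    (hind : IndepFun T C P)
    (f : ℝ → Fin 3) (hf : Measurable f) (j : Fin 3)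
    (u : ℝ) (hu : 0 ≤ u) :
    P {ω | T ω ≤ u ∧ f (T ω) = j ∧ T ω ≤ C ω}
      = ∫⁻ s in Set.Icc (0:ℝ) u, P {ω | s ≤ C ω}
          ∂(Measure.map T (P.restrict {ω | f (T ω) = j})) := by
  set μT := P.map T with hμT
  set ν := P.map C with hν
  have hB : MeasurableSet {t : ℝ | f t = j} := hf (measurableSet_singleton j)
  have hprod : P.map (fun ω => (T ω, C ω)) = μT.prod ν :=
    (indepFun_iff_map_prod_eq_prod_map_map hT.aemeasurable hC.aemeasurable).mp hind
  set S : Set (ℝ × ℝ) := {p | p.1 ≤ u ∧ f p.1 = j ∧ p.1 ≤ p.2} with hS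
  have hSm : MeasurableSet S := by
    apply MeasurableSet.inter (measurableSet_le measurable_fst measurable_const)
    exact ((hf.comp measurable_fst) (measurableSet_singleton j)).inter
      (measurableSet_le measurable_fst measurable_snd)
  set A : Set ℝ := {t | t ≤ u ∧ f t = j} with hA
  have hAm : MeasurableSet A := (measurableSet_Iic).inter hB
  have hg : ∀ t : ℝ, ν {c | t ≤ c} = P {ω | t ≤ C ω} := by
    intro t
    rw [show {c : ℝ | t ≤ c} = Ici t from rfl, hν, Measure.map_apply hC measurableSet_Ici]
    rfl
  -- LHS as product measure
  have hLHS : P {ω | T ω ≤ u ∧ f (T ω) = j ∧ T ω ≤ C ω}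
      = ∫⁻ t in A, P {ω | t ≤ C ω} ∂μT := by
    have h1 : P {ω | T ω ≤ u ∧ f (T ω) = j ∧ T ω ≤ C ω}
        = (P.map (fun ω => (T ω, C ω))) S := by
      rw [Measure.map_apply (hT.prodMk hC) hSm]; rfl
    rw [h1, hprod, Measure.prod_apply hSm]
    rw [← lintegral_indicator hAm]
    refine lintegral_congr fun t => ?_
    by_cases ht : t ∈ A
    · have : Prod.mk t ⁻¹' S = {c : ℝ | t ≤ c} := by
        ext c; simp only [mem_preimage, hS, mem_setOf_eq]
        exact ⟨fun h => h.2.2, fun h => ⟨ht.1, ht.2, h⟩⟩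
      rw [this, indicator_of_mem ht, hg]
    · have : Prod.mk t ⁻¹' S = (∅ : Set ℝ) := by
        ext c; simp only [mem_preimage, hS, mem_setOf_eq, mem_empty_iff_false, iff_false]
        intro h; exact ht ⟨h.1, h.2.1⟩
      rw [this, indicator_of_notMem ht, measure_empty]
  -- RHS: restrict map
  have hRHS : (∫⁻ s in Set.Icc (0:ℝ) u, P {ω | s ≤ C ω}
          ∂(Measure.map T (P.restrict {ω | f (T ω) = j})))
      = ∫⁻ t in Icc 0 u ∩ {t | f t = j}, P {ω | t ≤ C ω} ∂μT := by
    have h2 : {ω | f (T ω) = j} = T ⁻¹' {t | f t = j} := rfl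
    rw [h2, ← Measure.restrict_map hT hB, ← hμT,
      Measure.restrict_restrict measurableSet_Icc]
  rw [hLHS, hRHS]
  -- the two sets agree up to a μT-null set
  have hnull : μT (Iio 0) = 0 := by
    rw [hμT, Measure.map_apply hT measurableSet_Iio]
    have : T ⁻¹' Iio 0 = (∅ : Set Ω) := by
      ext ω; simp [not_lt.mpr (hTnn ω)]
    rw [this, measure_empty]
  refine setLIntegral_congr ?_
  rw [Filter.eventuallyEq_set]
  have : {t : ℝ | ¬ (t ∈ A ↔ t ∈ Icc 0 u ∩ {t | f t = j})} ⊆ Iio 0 := by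
    intro t ht
    simp only [hA, mem_setOf_eq, mem_inter_iff, mem_Icc] at ht
    by_contra h
    rw [mem_Iio, not_lt] at h
    exact ht (by tauto)
  exact Filter.eventually_iff.mpr (measure_mono_null this hnull)
end

section
/- Let T, C be independent nonnegative random variables, ε = f(T) ∈ {1,2,3} for measurable f, Z = min(T,C), and define the observed subdistribution H_j(u) = P(Z ≤ u, T ≤ C, ε = j). Let S₋(u)=P(T≥u), G₋(u)=P(C≥u), F_j(t)=P(T≤t,ε=j), and A_j(t)=∫_{[0,t]} (1/S₋) dF_j. Then for every t with G₋(t)>0 (and hence P(Z≥u)>0 on [0,t]), A_j(t) = ∫_{[0,t]} (1/P(Z ≥ ·)) dH_j. -/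
open MeasureTheory ProbabilityTheory Set
open scoped ENNReal

/-- Competing risks with right-censoring: `T` event time with cause `ε = f(T) ∈ {1,2,3}`,
`C` an independent censoring time, `Z = min(T,C)`.  The cause-specific cumulative hazard
`A_j(t) = ∫_{[0,t]} (1/S₋) dF_j` (where `S₋(s) = P(T ≥ s)` and `F_j` is the image under `T`
of `P` restricted to `{ε = j}`) is identifiable from the censored data: for every `t` with
`G₋(t) = P(C ≥ t) > 0`,
`A_j(t) = ∫_{[0,t]} (1 / P(Z ≥ ·)) dH_j`, where `H_j` is the image under `Z` of `P`
restricted to `{T ≤ C, ε = j}`. -/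
theorem stmt2 {Ω : Type*} [MeasurableSpace Ω] (P : Measure Ω) [IsProbabilityMeasure P]
    (T C : Ω → ℝ) (hT : Measurable T) (hC : Measurable C)
    (hTnn : ∀ ω, 0 ≤ T ω) (hCnn : ∀ ω, 0 ≤ C ω)
    (hind : IndepFun T C P)
    (f : ℝ → Fin 3) (hf : Measurable f) (j : Fin 3)
    (t : ℝ) (ht : 0 ≤ t) (hGpos : 0 < P {ω | t ≤ C ω}) :
    ∫⁻ s in Set.Icc (0:ℝ) t, (P {ω | s ≤ T ω})⁻¹
        ∂(Measure.map T (P.restrict {ω | f (T ω) = j}))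
      = ∫⁻ s in Set.Icc (0:ℝ) t, (P {ω | s ≤ min (T ω) (C ω)})⁻¹
          ∂(Measure.map (fun ω => min (T ω) (C ω))
              (P.restrict {ω | T ω ≤ C ω ∧ f (T ω) = j})) := by
  -- notation
  set S : ℝ → ℝ≥0∞ := fun s => P {ω | s ≤ T ω} with hSdef
  set G : ℝ → ℝ≥0∞ := fun s => P {ω | s ≤ C ω} with hGdef
  have hSmeas : Measurable S :=
    Antitone.measurable (fun a b hab => measure_mono (fun ω h => hab.trans h))
  have hGmeas : Measurable G :=
    Antitone.measurable (fun a b hab => measure_mono (fun ω h => hab.trans h))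
  set I : Set ℝ := Set.Icc (0:ℝ) t with hIdef
  have hI : MeasurableSet I := measurableSet_Icc
  set A' : Set ℝ := f ⁻¹' {j} with hA'def
  have hA' : MeasurableSet A' := hf (measurableSet_singleton j)
  -- the two key integrands
  set K : ℝ → ℝ≥0∞ := A'.indicator (I.indicator fun s => (S s)⁻¹) with hKdef
  set ψ : ℝ → ℝ≥0∞ := I.indicator (fun s => (S s * G s)⁻¹) with hψdef
  set K2 : ℝ → ℝ≥0∞ := A'.indicator ψ with hK2def
  have hψmeas : Measurable ψ := Measurable.indicator ((hSmeas.mul hGmeas).inv) hI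
  have hK2meas : Measurable K2 := hψmeas.indicator hA'
  have hKmeas : Measurable K :=
    (Measurable.indicator (hSmeas.inv) hI).indicator hA'
  -- independence: P {s ≤ min(T,C)} = S s * G s
  have hZ : ∀ s : ℝ, P {ω | s ≤ min (T ω) (C ω)} = S s * G s := by
    intro s
    have h1 : {ω | s ≤ min (T ω) (C ω)} = T ⁻¹' Ici s ∩ C ⁻¹' Ici s := by
      ext ω; simp [le_min_iff]
    rw [h1, hind.measure_inter_preimage_eq_mul _ _ measurableSet_Ici measurableSet_Ici]
    rfl
  -- LHS as an integral over Ω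
  have hLHS : ∫⁻ s in I, (S s)⁻¹ ∂(Measure.map T (P.restrict {ω | f (T ω) = j}))
      = ∫⁻ ω, K (T ω) ∂P := by
    rw [← lintegral_indicator hI, lintegral_map (show Measurable (I.indicator fun s => (S s)⁻¹) from Measurable.indicator (hSmeas.inv) hI) hT]
    have h2 : {ω | f (T ω) = j} = T ⁻¹' A' := rfl
    rw [h2, ← lintegral_indicator (hT hA')]
    refine lintegral_congr fun ω => ?_
    by_cases h : f (T ω) = j <;>
      simp [hKdef, Set.indicator_apply, Set.mem_preimage, hA'def, h]
  -- the mapped measure on the RHS: on the set, min(T,C) = T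
  have hBmeas : MeasurableSet {ω | T ω ≤ C ω ∧ f (T ω) = j} :=
    (measurableSet_le hT hC).inter ((hf.comp hT) (measurableSet_singleton j))
  have hmap : Measure.map (fun ω => min (T ω) (C ω))
        (P.restrict {ω | T ω ≤ C ω ∧ f (T ω) = j})
      = Measure.map T (P.restrict {ω | T ω ≤ C ω ∧ f (T ω) = j}) := by
    refine Measure.map_congr ?_
    rw [Filter.EventuallyEq, ae_restrict_iff' hBmeas]
    exact Filter.Eventually.of_forall fun ω h => min_eq_left h.1
  -- RHS as an integral over Ω
  have hRHS : ∫⁻ s in I, (P {ω | s ≤ min (T ω) (C ω)})⁻¹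
        ∂(Measure.map (fun ω => min (T ω) (C ω))
            (P.restrict {ω | T ω ≤ C ω ∧ f (T ω) = j}))
      = ∫⁻ ω, {ω | T ω ≤ C ω}.indicator (fun ω => K2 (T ω)) ω ∂P := by
    rw [hmap]
    have h0 : ∀ s : ℝ, (P {ω | s ≤ min (T ω) (C ω)})⁻¹ = (S s * G s)⁻¹ := fun s => by
      rw [hZ s]
    simp only [h0]
    rw [← lintegral_indicator hI, lintegral_map hψmeas hT, ← lintegral_indicator hBmeas]
    refine lintegral_congr fun ω => ?_
    by_cases h1 : T ω ≤ C ω <;> by_cases h2 : f (T ω) = j <;>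
      simp [hK2def, Set.indicator_apply, Set.mem_preimage, hA'def, h1, h2]
  rw [hLHS, hRHS]
  -- push the RHS through the product structure
  set μT : Measure ℝ := Measure.map T P with hμT
  set μC : Measure ℝ := Measure.map C P with hμC
  haveI : IsProbabilityMeasure μT := Measure.isProbabilityMeasure_map hT.aemeasurable
  haveI : IsProbabilityMeasure μC := Measure.isProbabilityMeasure_map hC.aemeasurable
  have hprod : Measure.map (fun ω => (T ω, C ω)) P = μT.prod μC :=
    (indepFun_iff_map_prod_eq_prod_map_map hT.aemeasurable hC.aemeasurable).mp hind
  set Φ : ℝ × ℝ → ℝ≥0∞ := fun p => {q : ℝ × ℝ | q.1 ≤ q.2}.indicator (fun q => K2 q.1) p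
    with hΦdef
  have hΦmeas : Measurable Φ :=
    Measurable.indicator (hK2meas.comp measurable_fst)
      (measurableSet_le measurable_fst measurable_snd)
  have step1 : ∫⁻ ω, {ω | T ω ≤ C ω}.indicator (fun ω => K2 (T ω)) ω ∂P
      = ∫⁻ ω, Φ (T ω, C ω) ∂P := by
    refine lintegral_congr fun ω => ?_
    by_cases h : T ω ≤ C ω <;> simp [hΦdef, Set.indicator_apply, h]
  have step2 : ∫⁻ ω, Φ (T ω, C ω) ∂P = ∫⁻ p, Φ p ∂(μT.prod μC) := by
    rw [← hprod, lintegral_map hΦmeas (hT.prodMk hC)]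
  have hGmap : ∀ x : ℝ, μC (Ici x) = G x := fun x => by
    rw [hμC, Measure.map_apply hC measurableSet_Ici]; rfl
  have step3 : ∫⁻ p, Φ p ∂(μT.prod μC) = ∫⁻ x, K2 x * G x ∂μT := by
    rw [MeasureTheory.lintegral_prod Φ hΦmeas.aemeasurable]
    refine lintegral_congr fun x => ?_
    have h1 : ∀ y : ℝ, Φ (x, y) = (Ici x).indicator (fun _ => K2 x) y := by
      intro y
      by_cases h : x ≤ y <;> simp [hΦdef, Set.indicator_apply, h]
    simp only [h1]
    rw [lintegral_indicator measurableSet_Ici, setLIntegral_const, hGmap]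
  rw [step1, step2, step3]
  -- LHS over μT
  have hLHS2 : ∫⁻ ω, K (T ω) ∂P = ∫⁻ x, K x ∂μT := (lintegral_map hKmeas hT).symm
  rw [hLHS2]
  -- final pointwise identity
  refine lintegral_congr fun x => ?_
  by_cases hxA : x ∈ A'
  · by_cases hxI : x ∈ I
    · have hG0 : G x ≠ 0 := by
        have hle : G t ≤ G x := measure_mono (fun ω h => (hxI.2).trans h)
        exact (lt_of_lt_of_le hGpos hle).ne'
      have hGtop : G x ≠ ∞ := measure_ne_top P _
      simp only [hKdef, hK2def, hψdef, Set.indicator_of_mem hxA, Set.indicator_of_mem hxI]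
      rw [ENNReal.mul_inv (Or.inr hGtop) (Or.inr hG0), mul_assoc,
        ENNReal.inv_mul_cancel hG0 hGtop, mul_one]
    · simp [hKdef, hK2def, hψdef, Set.indicator_of_mem hxA, Set.indicator_of_notMem hxI]
  · simp [hKdef, hK2def, Set.indicator_of_notMem hxA]
end

section
/- Let T₁, T₂, C₂ be random variables with T₂ and C₂ independent, T₁ positive. Define the transformed survival time R = T₂/T₁ and transformed censoring time D = C₂/T₁. If T₁ is non-degenerate and both T₂ and C₂ are a.s. positive and independent of each other but C₂ is independent of (T₁,T₂), then R and D need not be independent; concretely, if T₁ takes values 1 and 2 each with probability 1/2, and T₂, C₂ are independent of T₁ and of each other with continuous positive distributions, then there exist r, d > 0 such that P(R > r, D > d) ≠ P(R > r)·P(D > d). -/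
open MeasureTheory ProbabilityTheory
open scoped ENNReal

lemma meas3 {Ω : Type*} [MeasurableSpace Ω] {P : Measure Ω} {f g h : Ω → ℝ}
    (hi : iIndepFun ![f, g, h] P)
    {s t u : Set ℝ} (hs : MeasurableSet s) (ht : MeasurableSet t) (hu : MeasurableSet u) :
    P (f ⁻¹' s ∩ g ⁻¹' t ∩ h ⁻¹' u) = P (f ⁻¹' s) * P (g ⁻¹' t) * P (h ⁻¹' u) := by
  have key := hi.meas_iInter (s := ![f ⁻¹' s, g ⁻¹' t, h ⁻¹' u]) ?_
  · rw [show (⋂ i, ![f ⁻¹' s, g ⁻¹' t, h ⁻¹' u] i) = f ⁻¹' s ∩ g ⁻¹' t ∩ h ⁻¹' u by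
      ext ω; simp [Fin.forall_fin_succ, and_assoc], Fin.prod_univ_three] at key
    simpa using key
  · intro i
    fin_cases i
    · exact ⟨s, hs, rfl⟩
    · exact ⟨t, ht, rfl⟩
    · exact ⟨u, hu, rfl⟩

lemma exists_gap {Ω : Type*} [MeasurableSpace Ω] (P : Measure Ω) [IsProbabilityMeasure P]
    {f : Ω → ℝ} (hf : Measurable f) (hpos : P {ω | 0 < f ω} = 1) :
    ∃ r > (0:ℝ), P (f ⁻¹' Set.Ioi (2 * r)) < P (f ⁻¹' Set.Ioi r) := by
  by_contra hcon
  push_neg at hcon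
  have heq : ∀ r : ℝ, 0 < r → P (f ⁻¹' Set.Ioi (2 * r)) = P (f ⁻¹' Set.Ioi r) := by
    intro r hr
    refine le_antisymm (measure_mono ?_) (hcon r hr)
    intro ω hω
    simp only [Set.mem_preimage, Set.mem_Ioi] at *
    linarith
  have h1 : ∀ n : ℕ, P (f ⁻¹' Set.Ioi ((2:ℝ) ^ n)) = P (f ⁻¹' Set.Ioi 1) := by
    intro n; induction n with
    | zero => norm_num
    | succ n ih =>
      rw [show (2:ℝ) ^ (n+1) = 2 * 2 ^ n by ring, heq _ (by positivity), ih]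
  have h2 : ∀ n : ℕ, P (f ⁻¹' Set.Ioi ((2:ℝ)⁻¹ ^ n)) = P (f ⁻¹' Set.Ioi 1) := by
    intro n; induction n with
    | zero => norm_num
    | succ n ih =>
      rw [← ih, ← heq _ (by positivity)]
      norm_num
      ring_nf
  have hU : (⋃ n : ℕ, f ⁻¹' Set.Ioi ((2:ℝ)⁻¹ ^ n)) = {ω | 0 < f ω} := by
    ext ω
    simp only [Set.mem_iUnion, Set.mem_preimage, Set.mem_Ioi, Set.mem_setOf_eq]
    constructor
    · rintro ⟨n, hn⟩; exact lt_trans (by positivity) hn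
    · intro h0
      exact exists_pow_lt_of_lt_one h0 (by norm_num : (2:ℝ)⁻¹ < 1)
  have hmono : Monotone (fun n : ℕ => f ⁻¹' Set.Ioi ((2:ℝ)⁻¹ ^ n)) := by
    intro m n hmn ω hω
    simp only [Set.mem_preimage, Set.mem_Ioi] at *
    calc (2:ℝ)⁻¹ ^ n ≤ (2:ℝ)⁻¹ ^ m :=
          pow_le_pow_of_le_one (by norm_num) (by norm_num) hmn
      _ < f ω := hω
  have hone : P (f ⁻¹' Set.Ioi 1) = 1 := by
    have h := hmono.measure_iUnion (μ := P)
    rw [hU, hpos] at h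
    simp only [h2] at h
    rw [iSup_const] at h
    exact h.symm
  have hanti : Antitone (fun n : ℕ => f ⁻¹' Set.Ioi ((2:ℝ) ^ n)) := by
    intro m n hmn ω hω
    simp only [Set.mem_preimage, Set.mem_Ioi] at *
    calc (2:ℝ) ^ m ≤ (2:ℝ) ^ n := pow_le_pow_right₀ one_le_two hmn
      _ < f ω := hω
  have hI : (⋂ n : ℕ, f ⁻¹' Set.Ioi ((2:ℝ) ^ n)) = ∅ := by
    ext ω
    simp only [Set.mem_iInter, Set.mem_preimage, Set.mem_Ioi, Set.mem_empty_iff_false,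
      iff_false, not_forall, not_lt]
    obtain ⟨n, hn⟩ := pow_unbounded_of_one_lt (f ω) (one_lt_two (α := ℝ))
    exact ⟨n, hn.le⟩
  have hzero : P (f ⁻¹' Set.Ioi 1) = 0 := by
    have h := hanti.measure_iInter
      (fun n => (hf measurableSet_Ioi).nullMeasurableSet) ⟨0, measure_ne_top P _⟩
    rw [hI, measure_empty] at h
    simp only [h1] at h
    rw [iInf_const] at h
    exact h.symm
  rw [hone] at hzero
  exact one_ne_zero hzero

/-- Failure of independent censoring for the PFS-ratio transformation: if `T₁` takes the
values `1` and `2` with probability `1/2` each, and `T₂`, `C₂` are mutually independent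
of `T₁` and of each other with continuous (atomless) positive distributions, then the
transformed survival time `R = T₂/T₁` and the transformed censoring time `D = C₂/T₁` are
not independent: there are `r, d > 0` with `P(R > r, D > d) ≠ P(R > r)·P(D > d)`. -/
theorem stmt13 {Ω : Type*} [MeasurableSpace Ω] (P : Measure Ω) [IsProbabilityMeasure P]
    (T₁ T₂ C₂ : Ω → ℝ)
    (hT₁ : Measurable T₁) (hT₂ : Measurable T₂) (hC₂ : Measurable C₂)
    (hindep : iIndepFun ![T₁, T₂, C₂] P)
    (hT₁1 : P {ω | T₁ ω = 1} = 1 / 2) (hT₁2 : P {ω | T₁ ω = 2} = 1 / 2)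
    (hT₂pos : P {ω | 0 < T₂ ω} = 1) (hC₂pos : P {ω | 0 < C₂ ω} = 1)
    (hT₂cont : ∀ x : ℝ, P {ω | T₂ ω = x} = 0)
    (hC₂cont : ∀ x : ℝ, P {ω | C₂ ω = x} = 0) :
    ∃ r > (0:ℝ), ∃ d > (0:ℝ),
      P {ω | r < T₂ ω / T₁ ω ∧ d < C₂ ω / T₁ ω}
        ≠ P {ω | r < T₂ ω / T₁ ω} * P {ω | d < C₂ ω / T₁ ω} := by
  obtain ⟨r, hr, hgapT⟩ := exists_gap P hT₂ hT₂pos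
  obtain ⟨d, hd, hgapC⟩ := exists_gap P hC₂ hC₂pos
  refine ⟨r, hr, d, hd, ?_⟩
  set A1 : Set Ω := T₁ ⁻¹' {1} with hA1
  set A2 : Set Ω := T₁ ⁻¹' {2} with hA2
  have hA1m : MeasurableSet A1 := hT₁ (measurableSet_singleton 1)
  have hA2m : MeasurableSet A2 := hT₁ (measurableSet_singleton 2)
  have hPA1 : P A1 = 1 / 2 := hT₁1
  have hPA2 : P A2 = 1 / 2 := hT₁2
  have hdisj : Disjoint A1 A2 := by
    rw [Set.disjoint_left]
    intro ω h1 h2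
    simp only [hA1, hA2, Set.mem_preimage, Set.mem_singleton_iff] at h1 h2
    rw [h1] at h2; norm_num at h2
  have hnull : P (A1 ∪ A2)ᶜ = 0 := by
    have hu : P (A1 ∪ A2) = 1 := by
      rw [measure_union hdisj hA2m, hPA1, hPA2, one_div, ENNReal.inv_two_add_inv_two]
    rw [measure_compl (hA1m.union hA2m) (measure_ne_top _ _), hu, measure_univ, tsub_self]
  have split : ∀ S : Set Ω, MeasurableSet S → P S = P (S ∩ A1) + P (S ∩ A2) := by
    intro S hS
    rw [← measure_inter_conull (s := S) hnull, Set.inter_union_distrib_left]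
    exact measure_union (hdisj.mono Set.inter_subset_right Set.inter_subset_right)
      (hS.inter hA2m)
  -- the four tail probabilities
  set a := P (T₂ ⁻¹' Set.Ioi r) with ha
  set b := P (T₂ ⁻¹' Set.Ioi (2 * r)) with hb
  set c := P (C₂ ⁻¹' Set.Ioi d) with hc
  set e := P (C₂ ⁻¹' Set.Ioi (2 * d)) with he
  -- pairwise independence facts
  have hTT : IndepFun T₁ T₂ P := hindep.indepFun (show (0 : Fin 3) ≠ 1 by decide)
  have hTC : IndepFun T₁ C₂ P := hindep.indepFun (show (0 : Fin 3) ≠ 2 by decide)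
  have hR : P {ω | r < T₂ ω / T₁ ω} = 1 / 2 * a + 1 / 2 * b := by
    have hSm : MeasurableSet {ω | r < T₂ ω / T₁ ω} :=
      measurableSet_lt measurable_const (hT₂.div hT₁)
    rw [split _ hSm]
    have e1 : {ω | r < T₂ ω / T₁ ω} ∩ A1 = A1 ∩ T₂ ⁻¹' Set.Ioi r := by
      ext ω
      simp only [Set.mem_inter_iff, Set.mem_setOf_eq, hA1, Set.mem_preimage,
        Set.mem_singleton_iff, Set.mem_Ioi]
      constructor
      · rintro ⟨h1, h2⟩; rw [h2, div_one] at h1; exact ⟨h2, h1⟩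
      · rintro ⟨h2, h1⟩; exact ⟨by rw [h2, div_one]; exact h1, h2⟩
    have e2 : {ω | r < T₂ ω / T₁ ω} ∩ A2 = A2 ∩ T₂ ⁻¹' Set.Ioi (2 * r) := by
      ext ω
      simp only [Set.mem_inter_iff, Set.mem_setOf_eq, hA2, Set.mem_preimage,
        Set.mem_singleton_iff, Set.mem_Ioi]
      constructor
      · rintro ⟨h1, h2⟩
        rw [h2, lt_div_iff₀ (by norm_num : (0:ℝ) < 2)] at h1
        exact ⟨h2, by linarith⟩
      · rintro ⟨h2, h1⟩
        refine ⟨?_, h2⟩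
        rw [h2, lt_div_iff₀ (by norm_num : (0:ℝ) < 2)]
        linarith
    rw [e1, e2,
      hTT.measure_inter_preimage_eq_mul _ _ (measurableSet_singleton 1) measurableSet_Ioi,
      hTT.measure_inter_preimage_eq_mul _ _ (measurableSet_singleton 2) measurableSet_Ioi,
      hPA1, hPA2]
  have hD : P {ω | d < C₂ ω / T₁ ω} = 1 / 2 * c + 1 / 2 * e := by
    have hSm : MeasurableSet {ω | d < C₂ ω / T₁ ω} :=
      measurableSet_lt measurable_const (hC₂.div hT₁)
    rw [split _ hSm]
    have e1 : {ω | d < C₂ ω / T₁ ω} ∩ A1 = A1 ∩ C₂ ⁻¹' Set.Ioi d := by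
      ext ω
      simp only [Set.mem_inter_iff, Set.mem_setOf_eq, hA1, Set.mem_preimage,
        Set.mem_singleton_iff, Set.mem_Ioi]
      constructor
      · rintro ⟨h1, h2⟩; rw [h2, div_one] at h1; exact ⟨h2, h1⟩
      · rintro ⟨h2, h1⟩; exact ⟨by rw [h2, div_one]; exact h1, h2⟩
    have e2 : {ω | d < C₂ ω / T₁ ω} ∩ A2 = A2 ∩ C₂ ⁻¹' Set.Ioi (2 * d) := by
      ext ω
      simp only [Set.mem_inter_iff, Set.mem_setOf_eq, hA2, Set.mem_preimage,
        Set.mem_singleton_iff, Set.mem_Ioi]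
      constructor
      · rintro ⟨h1, h2⟩
        rw [h2, lt_div_iff₀ (by norm_num : (0:ℝ) < 2)] at h1
        exact ⟨h2, by linarith⟩
      · rintro ⟨h2, h1⟩
        refine ⟨?_, h2⟩
        rw [h2, lt_div_iff₀ (by norm_num : (0:ℝ) < 2)]
        linarith
    rw [e1, e2,
      hTC.measure_inter_preimage_eq_mul _ _ (measurableSet_singleton 1) measurableSet_Ioi,
      hTC.measure_inter_preimage_eq_mul _ _ (measurableSet_singleton 2) measurableSet_Ioi,
      hPA1, hPA2]
  have hJ : P {ω | r < T₂ ω / T₁ ω ∧ d < C₂ ω / T₁ ω}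
      = 1 / 2 * (a * c) + 1 / 2 * (b * e) := by
    have hSm : MeasurableSet {ω | r < T₂ ω / T₁ ω ∧ d < C₂ ω / T₁ ω} := by
      exact (measurableSet_lt measurable_const (hT₂.div hT₁)).inter
        (measurableSet_lt measurable_const (hC₂.div hT₁))
    rw [split _ hSm]
    have e1 : {ω | r < T₂ ω / T₁ ω ∧ d < C₂ ω / T₁ ω} ∩ A1
        = A1 ∩ T₂ ⁻¹' Set.Ioi r ∩ C₂ ⁻¹' Set.Ioi d := by
      ext ω
      simp only [Set.mem_inter_iff, Set.mem_setOf_eq, hA1, Set.mem_preimage,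
        Set.mem_singleton_iff, Set.mem_Ioi]
      constructor
      · rintro ⟨⟨h1, h2⟩, h3⟩
        rw [h3, div_one] at h1 h2
        exact ⟨⟨h3, h1⟩, h2⟩
      · rintro ⟨⟨h3, h1⟩, h2⟩
        refine ⟨⟨?_, ?_⟩, h3⟩ <;> rw [h3, div_one]
        · exact h1
        · exact h2
    have e2 : {ω | r < T₂ ω / T₁ ω ∧ d < C₂ ω / T₁ ω} ∩ A2
        = A2 ∩ T₂ ⁻¹' Set.Ioi (2 * r) ∩ C₂ ⁻¹' Set.Ioi (2 * d) := by
      ext ω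
      simp only [Set.mem_inter_iff, Set.mem_setOf_eq, hA2, Set.mem_preimage,
        Set.mem_singleton_iff, Set.mem_Ioi]
      constructor
      · rintro ⟨⟨h1, h2⟩, h3⟩
        rw [h3, lt_div_iff₀ (by norm_num : (0:ℝ) < 2)] at h1 h2
        exact ⟨⟨h3, by linarith⟩, by linarith⟩
      · rintro ⟨⟨h3, h1⟩, h2⟩
        refine ⟨⟨?_, ?_⟩, h3⟩ <;> rw [h3, lt_div_iff₀ (by norm_num : (0:ℝ) < 2)] <;> linarith
    rw [e1, e2,
      meas3 hindep (measurableSet_singleton 1) measurableSet_Ioi measurableSet_Ioi,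
      meas3 hindep (measurableSet_singleton 2) measurableSet_Ioi measurableSet_Ioi,
      hPA1, hPA2]
    ring
  rw [hJ, hR, hD]
  intro heqn
  -- pass to real numbers
  have hane : a ≠ ⊤ := measure_ne_top _ _
  have hbne : b ≠ ⊤ := measure_ne_top _ _
  have hcne : c ≠ ⊤ := measure_ne_top _ _
  have hene : e ≠ ⊤ := measure_ne_top _ _
  have hhalf : (1 / 2 : ℝ≥0∞) ≠ ⊤ := by norm_num
  have key := congrArg ENNReal.toReal heqn
  rw [ENNReal.toReal_add
      (ENNReal.mul_ne_top hhalf (ENNReal.mul_ne_top hane hcne))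
      (ENNReal.mul_ne_top hhalf (ENNReal.mul_ne_top hbne hene)),
    ENNReal.toReal_mul (a := (1 / 2 : ℝ≥0∞) * a + 1 / 2 * b),
    ENNReal.toReal_add (ENNReal.mul_ne_top hhalf hane) (ENNReal.mul_ne_top hhalf hbne),
    ENNReal.toReal_add (ENNReal.mul_ne_top hhalf hcne) (ENNReal.mul_ne_top hhalf hene)] at key
  simp only [ENNReal.toReal_mul, ENNReal.toReal_div, ENNReal.toReal_one,
    ENNReal.toReal_ofNat] at key
  have haB : b.toReal < a.toReal := (ENNReal.toReal_lt_toReal hbne hane).mpr hgapT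
  have hcE : e.toReal < c.toReal := (ENNReal.toReal_lt_toReal hene hcne).mpr hgapC
  nlinarith [mul_pos (sub_pos.2 haB) (sub_pos.2 hcE)]
end
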